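/- arXiv:1305.6235 — 3 statements merged into one kernel-verified Lean document; each statement's English description precedes it below -/
import Mathlib

section
/- Let B and Y be Banach spaces and M₊ a seminormed nonnegative cone in B that embeds compactly into B. Assume that whenever a sequence (wₙ) in B satisfies wₙ → w in B and wₙ → 0 in Y, then w = 0. Then for every ε > 0 there exists C_ε > 0 such that for all u, v ∈ M₊ ∩ Y, ‖u − v‖_B ≤ ε([u] + [v]) + C_ε‖u − v‖_Y. -/
open MeasureTheory Filter Topology

/-- Ehrling-type inequality for a seminormed nonnegative cone `M` in a Banach
space `B`.  The intersection with the Banach space `Y` is modelled by a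
submodule `V` of `B` together with a linear map `j : V →ₗ[ℝ] Y` giving the
`Y`-realization of elements of `B ∩ Y`. -/
theorem stmt0
    {B Y : Type*} [NormedAddCommGroup B] [NormedSpace ℝ B] [CompleteSpace B]
    [NormedAddCommGroup Y] [NormedSpace ℝ Y] [CompleteSpace Y]
    (M : Set B) (cn : B → ℝ)
    (hMcone : ∀ u ∈ M, ∀ c : ℝ, 0 ≤ c → c • u ∈ M)
    (hcn_nonneg : ∀ u ∈ M, 0 ≤ cn u)
    (hcn_zero : ∀ u ∈ M, (cn u = 0 ↔ u = 0))
    (hcn_smul : ∀ u ∈ M, ∀ c : ℝ, 0 ≤ c → cn (c • u) = c * cn u)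
    -- M ↪ B compactly: every cn-bounded sequence in M has a convergent subsequence in B
    (hcompact : ∀ w : ℕ → B, (∀ n, w n ∈ M) → (∃ C : ℝ, ∀ n, cn (w n) ≤ C) →
      ∃ φ : ℕ → ℕ, StrictMono φ ∧ ∃ z : B,
        Tendsto (fun n => w (φ n)) atTop (𝓝 z))
    (V : Submodule ℝ B) (j : V →ₗ[ℝ] Y)
    -- condition (ii): wₙ → w in B and wₙ → 0 in Y imply w = 0
    (hii : ∀ (w : ℕ → V) (wl : B),
      Tendsto (fun n => (w n : B)) atTop (𝓝 wl) →
      Tendsto (fun n => j (w n)) atTop (𝓝 (0 : Y)) → wl = 0) :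
    ∀ ε > (0:ℝ), ∃ C > (0:ℝ), ∀ (u v : B) (hu : u ∈ V) (hv : v ∈ V),
      u ∈ M → v ∈ M →
      ‖u - v‖ ≤ ε * (cn u + cn v) + C * ‖j ⟨u, hu⟩ - j ⟨v, hv⟩‖ := by
  intro ε hε
  by_contra h
  push_neg at h
  have h' : ∀ n : ℕ, ∃ u v, ∃ (hu : u ∈ V) (hv : v ∈ V), u ∈ M ∧ v ∈ M ∧
      ε * (cn u + cn v) + ((n : ℝ) + 1) * ‖j ⟨u, hu⟩ - j ⟨v, hv⟩‖ < ‖u - v‖ := by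
    intro n
    exact h ((n : ℝ) + 1) (by positivity)
  choose u v hu hv huM hvM hlt using h'
  set s : ℕ → ℝ := fun n => cn (u n) + cn (v n) with hs
  have hspos : ∀ n, 0 < s n := by
    intro n
    rcases lt_or_eq_of_le (add_nonneg (hcn_nonneg _ (huM n)) (hcn_nonneg _ (hvM n))) with h1 | h1
    · exact h1
    · exfalso
      have hcu : cn (u n) = 0 := le_antisymm (by nlinarith [hcn_nonneg _ (huM n), hcn_nonneg _ (hvM n)]) (hcn_nonneg _ (huM n))
      have hcv : cn (v n) = 0 := le_antisymm (by nlinarith [hcn_nonneg _ (huM n), hcn_nonneg _ (hvM n)]) (hcn_nonneg _ (hvM n))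
      have hu0 : u n = 0 := (hcn_zero _ (huM n)).1 hcu
      have hv0 : v n = 0 := (hcn_zero _ (hvM n)).1 hcv
      have hnn : (0:ℝ) ≤ ε * (cn (u n) + cn (v n)) + ((n : ℝ) + 1) * ‖j ⟨u n, hu n⟩ - j ⟨v n, hv n⟩‖ := by
        have : 0 ≤ cn (u n) + cn (v n) :=
          add_nonneg (hcn_nonneg _ (huM n)) (hcn_nonneg _ (hvM n))
        positivity
      have h2 := hlt n
      have hz : ‖u n - v n‖ = 0 := by rw [hu0, hv0, sub_zero, norm_zero]
      linarith
  set tu : ℕ → B := fun n => (s n)⁻¹ • u n with htu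
  set tv : ℕ → B := fun n => (s n)⁻¹ • v n with htv
  have hinv_nonneg : ∀ n, (0:ℝ) ≤ (s n)⁻¹ := fun n => inv_nonneg.2 (hspos n).le
  have htuM : ∀ n, tu n ∈ M := fun n => hMcone _ (huM n) _ (hinv_nonneg n)
  have htvM : ∀ n, tv n ∈ M := fun n => hMcone _ (hvM n) _ (hinv_nonneg n)
  have htub : ∀ n, cn (tu n) ≤ 1 := by
    intro n
    rw [htu]
    simp only
    rw [hcn_smul _ (huM n) _ (hinv_nonneg n)]
    rw [inv_mul_le_iff₀ (hspos n), mul_one]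
    have := hcn_nonneg _ (hvM n); simp [hs]; linarith
  have htvb : ∀ n, cn (tv n) ≤ 1 := by
    intro n
    rw [htv]
    simp only
    rw [hcn_smul _ (hvM n) _ (hinv_nonneg n)]
    rw [inv_mul_le_iff₀ (hspos n), mul_one]
    have := hcn_nonneg _ (huM n); simp [hs]; linarith
  obtain ⟨φ₁, hφ₁, z₁, hz₁⟩ := hcompact tu htuM ⟨1, htub⟩
  obtain ⟨φ₂, hφ₂, z₂, hz₂⟩ := hcompact (fun n => tv (φ₁ n)) (fun n => htvM _) ⟨1, fun n => htvb _⟩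
  set ψ : ℕ → ℕ := fun n => φ₁ (φ₂ n) with hψ
  have hψmono : StrictMono ψ := hφ₁.comp hφ₂
  have htuz : Tendsto (fun n => tu (ψ n)) atTop (𝓝 z₁) :=
    hz₁.comp hφ₂.tendsto_atTop
  have htvz : Tendsto (fun n => tv (ψ n)) atTop (𝓝 z₂) := hz₂
  set w : ℕ → V := fun n => ⟨tu (ψ n) - tv (ψ n),
    Submodule.sub_mem V (Submodule.smul_mem V _ (hu (ψ n))) (Submodule.smul_mem V _ (hv (ψ n)))⟩ with hw
  have hwB : Tendsto (fun n => ((w n : V) : B)) atTop (𝓝 (z₁ - z₂)) := htuz.sub htvz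
  have hweq : ∀ n, w n = (s (ψ n))⁻¹ • ((⟨u (ψ n), hu (ψ n)⟩ : V) - ⟨v (ψ n), hv (ψ n)⟩) := by
    intro n
    apply Subtype.ext
    simp [hw, htu, htv, smul_sub]
  have hjw : ∀ n, j (w n) = (s (ψ n))⁻¹ • (j ⟨u (ψ n), hu (ψ n)⟩ - j ⟨v (ψ n), hv (ψ n)⟩) := by
    intro n
    rw [hweq n, _root_.map_smul, map_sub]
  have hjwnorm : ∀ n, ‖j (w n)‖ = (s (ψ n))⁻¹ * ‖j ⟨u (ψ n), hu (ψ n)⟩ - j ⟨v (ψ n), hv (ψ n)⟩‖ := by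
    intro n
    rw [hjw n, norm_smul, Real.norm_eq_abs, abs_of_nonneg (hinv_nonneg _)]
  have hwnorm : ∀ n, ‖((w n : V) : B)‖ = (s (ψ n))⁻¹ * ‖u (ψ n) - v (ψ n)‖ := by
    intro n
    show ‖tu (ψ n) - tv (ψ n)‖ = _
    rw [htu, htv]
    simp only
    rw [← smul_sub, norm_smul, Real.norm_eq_abs, abs_of_nonneg (hinv_nonneg _)]
  -- key scaled inequality
  have hkey : ∀ n, ε + ((ψ n : ℝ) + 1) * ‖j (w n)‖ < ‖((w n : V) : B)‖ := by
    intro n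
    have h1 := hlt (ψ n)
    have hp := hspos (ψ n)
    rw [hwnorm n, hjwnorm n]
    have hne : s (ψ n) ≠ 0 := hp.ne'
    have h2 : (s (ψ n))⁻¹ * (ε * s (ψ n) + ((ψ n : ℝ) + 1) * ‖j ⟨u (ψ n), hu (ψ n)⟩ - j ⟨v (ψ n), hv (ψ n)⟩‖)
        < (s (ψ n))⁻¹ * ‖u (ψ n) - v (ψ n)‖ := by
      apply mul_lt_mul_of_pos_left _ (inv_pos.2 hp)
      have hseq : s (ψ n) = cn (u (ψ n)) + cn (v (ψ n)) := rfl
      rw [hseq]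
      exact h1
    calc ε + ((ψ n : ℝ) + 1) * ((s (ψ n))⁻¹ * ‖j ⟨u (ψ n), hu (ψ n)⟩ - j ⟨v (ψ n), hv (ψ n)⟩‖)
        = (s (ψ n))⁻¹ * (ε * s (ψ n) + ((ψ n : ℝ) + 1) * ‖j ⟨u (ψ n), hu (ψ n)⟩ - j ⟨v (ψ n), hv (ψ n)⟩‖) := by
          field_simp
      _ < (s (ψ n))⁻¹ * ‖u (ψ n) - v (ψ n)‖ := h2
  -- bound on ‖w n‖
  have hnormlim : Tendsto (fun n => ‖((w n : V) : B)‖) atTop (𝓝 ‖z₁ - z₂‖) := hwB.norm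
  obtain ⟨K, hK⟩ := hnormlim.bddAbove_range
  have hKb : ∀ n, ‖((w n : V) : B)‖ ≤ K := fun n => hK ⟨n, rfl⟩
  have hjle : ∀ n, ‖j (w n)‖ ≤ K / ((n : ℝ) + 1) := by
    intro n
    have h1 := hkey n
    have h2 := hKb n
    have hψn : (n : ℝ) ≤ (ψ n : ℝ) := by exact_mod_cast hψmono.le_apply
    have hjnn : 0 ≤ ‖j (w n)‖ := norm_nonneg _
    rw [le_div_iff₀ (by positivity : (0:ℝ) < (n : ℝ) + 1)]
    nlinarith
  have hjtend : Tendsto (fun n => j (w n)) atTop (𝓝 (0 : Y)) := by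
    rw [tendsto_zero_iff_norm_tendsto_zero]
    apply squeeze_zero (fun n => norm_nonneg _) hjle
    have := (tendsto_const_div_atTop_nhds_zero_nat K).comp (tendsto_add_atTop_nat 1)
    simpa [Function.comp_def, Nat.cast_add] using this
  have hwl0 : z₁ - z₂ = 0 := hii w (z₁ - z₂) hwB hjtend
  have : ε ≤ ‖z₁ - z₂‖ := by
    apply le_of_tendsto_of_tendsto tendsto_const_nhds hnormlim
    filter_upwards with n
    have := hkey n
    have : ε < ‖((w n : V) : B)‖ := by nlinarith [norm_nonneg (j (w n)), (Nat.cast_nonneg (ψ n) : (0:ℝ) ≤ ψ n)]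
    exact this.le
  rw [hwl0, norm_zero] at this
  linarith
end

section
/- Let B be a Banach space, 1 ≤ p < ∞, T = Nτ with τ > 0, and let u_τ : (0,T) → B be constant on each subinterval ((k−1)τ, kτ], say u_τ(t) = u_k there, for 1 ≤ k ≤ N. Then for every 0 < h < T, ‖σ_h u_τ − u_τ‖_{L^p(0,T−h;B)} ≤ h^{1/p} · Σ_{k=1}^{N−1} ‖u_{k+1} − u_k‖_B, where (σ_h u)(t) = u(t+h). -/
open MeasureTheory Set

/-- Time-shift estimate in `L^p(0,T-h;B)` for a piecewise constant function
`f` with `f(t) = u k` on `((k-1)τ, kτ]`, `1 ≤ k ≤ N`, `T = Nτ`. -/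
theorem stmt1
    {B : Type*} [NormedAddCommGroup B] [NormedSpace ℝ B] [CompleteSpace B]
    (p : ℝ) (hp : 1 ≤ p)
    (N : ℕ) (hN : 1 ≤ N) (τ T : ℝ) (hτ : 0 < τ) (hT : T = N * τ)
    (u : ℕ → B) (f : ℝ → B)
    (hf : ∀ k ∈ Finset.Icc 1 N, ∀ t ∈ Ioc ((k - 1 : ℝ) * τ) (k * τ), f t = u k)
    (h : ℝ) (hh0 : 0 < h) (hhT : h < T) :
    eLpNorm (fun t => f (t + h) - f t) (ENNReal.ofReal p)
        (volume.restrict (Ioc 0 (T - h)))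
      ≤ ENNReal.ofReal
          (h ^ (1 / p) * ∑ k ∈ Finset.Icc 1 (N - 1), ‖u (k + 1) - u k‖) := by
  set q : ENNReal := ENNReal.ofReal p with hq
  have hp0 : 0 < p := lt_of_lt_of_le one_pos hp
  have hq0 : q ≠ 0 := by
    simp [hq, ENNReal.ofReal_eq_zero, not_le, hp0]
  have hq_top : q ≠ ⊤ := ENNReal.ofReal_ne_top
  have hq1 : 1 ≤ q := by
    rw [hq, ← ENNReal.ofReal_one]
    exact ENNReal.ofReal_le_ofReal hp
  have hqtoReal : q.toReal = p := ENNReal.toReal_ofReal hp0.le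
  -- the indicator functions
  set g : ℕ → ℝ → B := fun k =>
    (Ioc ((k : ℝ) * τ - h) ((k : ℝ) * τ)).indicator (fun _ => u (k + 1) - u k) with hg
  -- pointwise identity on `Ioc 0 (T - h)`
  have key : ∀ t ∈ Ioc (0 : ℝ) (T - h),
      f (t + h) - f t = ∑ k ∈ Finset.Icc 1 (N - 1), g k t := by
    intro t ht
    obtain ⟨ht0, htT⟩ := ht
    have ht0' : 0 < t + h := by linarith
    set j : ℕ := ⌈t / τ⌉₊ with hjdef
    set j' : ℕ := ⌈(t + h) / τ⌉₊ with hj'def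
    have hj1 : 1 ≤ j := Nat.one_le_ceil_iff.2 (div_pos ht0 hτ)
    have hj'1 : 1 ≤ j' := Nat.one_le_ceil_iff.2 (div_pos ht0' hτ)
    have hjN : j ≤ N := Nat.ceil_le.2 (by
      rw [div_le_iff₀ hτ]
      nlinarith)
    have hj'N : j' ≤ N := Nat.ceil_le.2 (by
      rw [div_le_iff₀ hτ]
      nlinarith)
    have hjj' : j ≤ j' := Nat.ceil_le_ceil (by
      apply div_le_div_of_nonneg_right _ hτ.le
      linarith)
    -- f t = u j
    have hft : f t = u j := by
      apply hf j (Finset.mem_Icc.2 ⟨hj1, hjN⟩)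
      constructor
      · have : ((j - 1 : ℕ) : ℝ) < t / τ := Nat.lt_ceil.1 (by omega)
        rw [lt_div_iff₀ hτ] at this
        have hcast : ((j - 1 : ℕ) : ℝ) = (j : ℝ) - 1 := by
          push_cast [Nat.cast_sub hj1]; ring
        rw [hcast] at this
        exact this
      · have : t / τ ≤ (j : ℝ) := Nat.le_ceil _
        rw [div_le_iff₀ hτ] at this
        linarith
    have hfth : f (t + h) = u j' := by
      apply hf j' (Finset.mem_Icc.2 ⟨hj'1, hj'N⟩)
      constructor
      · have : ((j' - 1 : ℕ) : ℝ) < (t + h) / τ := Nat.lt_ceil.1 (by omega)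
        rw [lt_div_iff₀ hτ] at this
        have hcast : ((j' - 1 : ℕ) : ℝ) = (j' : ℝ) - 1 := by
          push_cast [Nat.cast_sub hj'1]; ring
        rw [hcast] at this
        exact this
      · have : (t + h) / τ ≤ (j' : ℝ) := Nat.le_ceil _
        rw [div_le_iff₀ hτ] at this
        linarith
    -- membership characterization
    have hmem : ∀ k : ℕ, t ∈ Ioc ((k : ℝ) * τ - h) ((k : ℝ) * τ) ↔ k ∈ Finset.Ico j j' := by
      intro k
      rw [Finset.mem_Ico, Set.mem_Ioc]
      constructor
      · rintro ⟨h1, h2⟩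
        constructor
        · exact Nat.ceil_le.2 ((div_le_iff₀ hτ).2 (by linarith))
        · exact Nat.lt_ceil.2 ((lt_div_iff₀ hτ).2 (by linarith))
      · rintro ⟨h1, h2⟩
        have h2' : (k : ℝ) * τ < t + h := by
          have := Nat.lt_ceil.1 h2
          rw [lt_div_iff₀ hτ] at this
          linarith
        have h1' : t ≤ (k : ℝ) * τ := by
          have := Nat.ceil_le.1 h1
          rw [div_le_iff₀ hτ] at this
          linarith
        exact ⟨by linarith, h1'⟩
    calc f (t + h) - f t = u j' - u j := by rw [hft, hfth]
      _ = ∑ k ∈ Finset.Ico j j', (u (k + 1) - u k) := by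
          rw [Finset.sum_Ico_eq_sub _ hjj', Finset.sum_range_sub, Finset.sum_range_sub]
          abel
      _ = ∑ k ∈ Finset.Icc 1 (N - 1) ∩ Finset.Ico j j', (u (k + 1) - u k) := by
          rw [Finset.inter_eq_right.2]
          intro k hk
          rw [Finset.mem_Ico] at hk
          rw [Finset.mem_Icc]
          omega
      _ = ∑ k ∈ Finset.Icc 1 (N - 1), g k t := by
          rw [← Finset.sum_ite_mem]
          apply Finset.sum_congr rfl
          intro k _
          rw [hg]
          simp only [Set.indicator_apply]
          by_cases hk : k ∈ Finset.Ico j j'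
          · rw [if_pos hk, if_pos ((hmem k).2 hk)]
          · rw [if_neg hk, if_neg (fun hc => hk ((hmem k).1 hc))]
  -- replace by the sum of indicators
  have hcongr : eLpNorm (fun t => f (t + h) - f t) q (volume.restrict (Ioc 0 (T - h)))
      = eLpNorm (∑ k ∈ Finset.Icc 1 (N - 1), g k) q (volume.restrict (Ioc 0 (T - h))) := by
    apply eLpNorm_congr_ae
    refine (ae_restrict_iff' measurableSet_Ioc).2 (ae_of_all _ fun t ht => ?_)
    simp only [Finset.sum_apply]
    exact key t ht
  rw [hcongr]
  have hmeas : ∀ k ∈ Finset.Icc 1 (N - 1),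
      AEStronglyMeasurable (g k) (volume.restrict (Ioc 0 (T - h))) := fun k _ =>
    (stronglyMeasurable_const.indicator measurableSet_Ioc).aestronglyMeasurable
  refine le_trans (eLpNorm_sum_le hmeas hq1) ?_
  -- bound each term
  have hterm : ∀ k ∈ Finset.Icc 1 (N - 1),
      eLpNorm (g k) q (volume.restrict (Ioc 0 (T - h)))
        ≤ ENNReal.ofReal (h ^ (1 / p)) * ENNReal.ofReal ‖u (k + 1) - u k‖ := by
    intro k _
    rw [hg, eLpNorm_indicator_const measurableSet_Ioc hq0 hq_top, hqtoReal]
    have hμ : (volume.restrict (Ioc 0 (T - h))) (Ioc ((k : ℝ) * τ - h) ((k : ℝ) * τ))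
        ≤ ENNReal.ofReal h := by
      refine le_trans (Measure.restrict_apply_le _ _) ?_
      rw [Real.volume_Ioc]
      apply ENNReal.ofReal_le_ofReal
      linarith
    calc (‖u (k + 1) - u k‖₊ : ENNReal) *
          (volume.restrict (Ioc 0 (T - h))) (Ioc ((k : ℝ) * τ - h) ((k : ℝ) * τ)) ^ (1 / p)
        ≤ (‖u (k + 1) - u k‖₊ : ENNReal) * ENNReal.ofReal h ^ (1 / p) := by
          gcongr
      _ = ENNReal.ofReal (h ^ (1 / p)) * ENNReal.ofReal ‖u (k + 1) - u k‖ := by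
          rw [ENNReal.ofReal_rpow_of_pos hh0, mul_comm]
          congr 1
          simp [ENNReal.ofReal, Real.toNNReal_eq_nnnorm_of_nonneg (norm_nonneg _)]
  refine le_trans (Finset.sum_le_sum hterm) ?_
  rw [← Finset.mul_sum, ENNReal.ofReal_mul (by positivity), ← ENNReal.ofReal_sum_of_nonneg]
  · intro k _
    exact norm_nonneg _
end

section
/- Let B be a Banach space, T = Nτ with τ > 0, let u_τ be piecewise constant with values u_k on ((k−1)τ, kτ], and let ũ_τ be the linear interpolation defined by ũ_τ(t) = u_1 for 0 < t ≤ τ and ũ_τ(t) = u_k − (kτ − t)(u_k − u_{k−1})/τ for (k−1)τ < t ≤ kτ, 2 ≤ k ≤ N. Then ‖ũ_τ − u_τ‖_{L^1(0,T;B)} ≤ ‖σ_τ u_τ − u_τ‖_{L^1(0,T−τ;B)}. -/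
open MeasureTheory Set

/-- The Rothe (piecewise linear) interpolation `g` of a piecewise constant
function `f` satisfies `‖g - f‖_{L^1(0,T;B)} ≤ ‖σ_τ f - f‖_{L^1(0,T-τ;B)}`. -/
theorem stmt9
    {B : Type*} [NormedAddCommGroup B] [NormedSpace ℝ B] [CompleteSpace B]
    (N : ℕ) (hN : 1 ≤ N) (τ T : ℝ) (hτ : 0 < τ) (hT : T = N * τ)
    (u : ℕ → B) (f g : ℝ → B)
    (hf : ∀ k ∈ Finset.Icc 1 N, ∀ t ∈ Ioc ((k - 1 : ℝ) * τ) (k * τ), f t = u k)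
    (hg1 : ∀ t ∈ Ioc (0 : ℝ) τ, g t = u 1)
    (hgk : ∀ k ∈ Finset.Icc 2 N, ∀ t ∈ Ioc ((k - 1 : ℝ) * τ) (k * τ),
      g t = u k - ((k * τ - t) / τ) • (u k - u (k - 1))) :
    ∫ t in Ioc 0 T, ‖g t - f t‖ ≤ ∫ t in Ioc 0 (T - τ), ‖f (t + τ) - f t‖ := by
  obtain ⟨M, rfl⟩ : ∃ M, N = M + 1 := ⟨N - 1, (Nat.succ_pred_eq_of_pos hN).symm⟩
  set a : ℕ → ℝ := fun k => (k : ℝ) * τ with ha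
  have hle : ∀ k : ℕ, a k ≤ a (k + 1) := by
    intro k
    simp only [ha]
    push_cast
    nlinarith [hτ.le]
  set c : ℕ → ℝ := fun k => if k = 0 then 0 else ‖u (k + 1) - u k‖ with hc
  have hc0 : ∀ k, 0 ≤ c k := by
    intro k
    simp only [hc]
    split <;> [rfl; exact norm_nonneg _]
  -- f on each subinterval
  have hfpt : ∀ k ≤ M, ∀ t ∈ Ioc (a k) (a (k + 1)), f t = u (k + 1) := by
    intro k hk t ht
    have hmem : k + 1 ∈ Finset.Icc 1 (M + 1) := by simp [Finset.mem_Icc]; omega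
    apply hf (k + 1) hmem t
    have h1 : ((k + 1 : ℕ) : ℝ) - 1 = (k : ℝ) := by push_cast; ring
    rw [h1]
    exact_mod_cast ht
  -- pointwise formula for ‖g - f‖ on each subinterval
  have hpt : ∀ k ≤ M, ∀ t ∈ Ioc (a k) (a (k + 1)),
      ‖g t - f t‖ = ((a (k + 1) - t) / τ) * c k := by
    intro k hk t ht
    have hft : f t = u (k + 1) := hfpt k hk t ht
    rcases Nat.eq_zero_or_pos k with rfl | hk1
    · have ht' : t ∈ Ioc (0 : ℝ) τ := by simpa [ha] using ht
      rw [hft, hg1 t ht']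
      simp [hc]
    · have hmem : k + 1 ∈ Finset.Icc 2 (M + 1) := by simp [Finset.mem_Icc]; omega
      have hcast : ((k + 1 : ℕ) : ℝ) - 1 = (k : ℝ) := by push_cast; ring
      have ht' : t ∈ Ioc ((((k + 1 : ℕ) : ℝ) - 1) * τ) (((k + 1 : ℕ) : ℝ) * τ) := by
        rw [hcast]; exact_mod_cast ht
      have hgt := hgk (k + 1) hmem t ht'
      simp only [Nat.add_sub_cancel] at hgt
      rw [hft, hgt]
      have h1 : u (k + 1) - ((((k + 1 : ℕ) : ℝ) * τ - t) / τ) • (u (k + 1) - u k)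
          - u (k + 1) = -(((((k + 1 : ℕ) : ℝ) * τ - t) / τ) • (u (k + 1) - u k)) := by
        abel
      rw [h1, norm_neg, norm_smul]
      have hnn : 0 ≤ (((k + 1 : ℕ) : ℝ) * τ - t) / τ := by
        apply div_nonneg _ hτ.le
        have h2 := ht.2
        simp only [ha] at h2
        push_cast at h2 ⊢
        linarith
      rw [Real.norm_eq_abs, abs_of_nonneg hnn]
      have hck : c k = ‖u (k + 1) - u k‖ := by
        simp only [hc, if_neg (Nat.pos_iff_ne_zero.mp hk1)]
      rw [hck]
  -- integrability of ‖g - f‖ on each subinterval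
  have hInt : ∀ k < M + 1, IntervalIntegrable (fun t => ‖g t - f t‖) volume (a k) (a (k + 1)) := by
    intro k hk
    rw [intervalIntegrable_iff_integrableOn_Ioc_of_le (hle k)]
    have hcont : Continuous fun t : ℝ => ((a (k + 1) - t) / τ) * c k :=
      (((continuous_const.sub continuous_id).div_const τ).mul continuous_const)
    exact (hcont.integrableOn_Ioc).congr_fun
      (fun t ht => (hpt k (by omega) t ht).symm) measurableSet_Ioc
  have hT0 : (0 : ℝ) ≤ T := by
    rw [hT]; positivity
  -- value of each subinterval integral of ‖g - f‖
  have hterm : ∀ k ≤ M, (∫ t in a k..a (k + 1), ‖g t - f t‖) = c k * (τ / 2) := by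
    intro k hk
    rw [intervalIntegral.integral_of_le (hle k),
      setIntegral_congr_fun measurableSet_Ioc (fun t ht => hpt k hk t ht),
      ← intervalIntegral.integral_of_le (hle k)]
    have h1 : ∀ t : ℝ, ((a (k + 1) - t) / τ) * c k = (c k / τ) * (a (k + 1) - t) := by
      intro t; field_simp
    simp_rw [h1]
    rw [intervalIntegral.integral_const_mul,
      intervalIntegral.integral_sub intervalIntegrable_const intervalIntegral.intervalIntegrable_id,
      intervalIntegral.integral_const, integral_id]
    simp only [ha, smul_eq_mul]
    push_cast
    field_simp
    ring
  -- left-hand side as a sum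
  have hL : ∫ t in Ioc 0 T, ‖g t - f t‖ = ∑ k ∈ Finset.range (M + 1), c k * (τ / 2) := by
    rw [← intervalIntegral.integral_of_le hT0]
    have h0 : a 0 = 0 := by simp [ha]
    have hNN : a (M + 1) = T := by simp [ha, hT]
    rw [← h0, ← hNN, ← intervalIntegral.sum_integral_adjacent_intervals hInt]
    exact Finset.sum_congr rfl fun k hk => hterm k (Nat.lt_succ_iff.mp (Finset.mem_range.mp hk))
  -- pointwise formula on the right
  have hRpt : ∀ k < M, ∀ t ∈ Ioc (a k) (a (k + 1)), ‖f (t + τ) - f t‖ = c (k + 1) := by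
    intro k hk t ht
    have hft : f t = u (k + 1) := hfpt k (by omega) t ht
    have ht2 : t + τ ∈ Ioc (a (k + 1)) (a (k + 2)) := by
      simp only [ha, mem_Ioc] at ht ⊢
      push_cast at ht ⊢
      constructor <;> linarith [ht.1, ht.2]
    have hft2 : f (t + τ) = u (k + 2) := hfpt (k + 1) (by omega) (t + τ) ht2
    rw [hft, hft2]
    simp [hc]
  -- integrability on the right
  have hIntR : ∀ k < M, IntervalIntegrable (fun t => ‖f (t + τ) - f t‖) volume (a k) (a (k + 1)) := by
    intro k hk
    rw [intervalIntegrable_iff_integrableOn_Ioc_of_le (hle k)]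
    exact (integrableOn_const (C := c (k + 1)) measure_Ioc_lt_top.ne).congr_fun
      (fun t ht => (hRpt k hk t ht).symm) measurableSet_Ioc
  have hTτ0 : (0 : ℝ) ≤ T - τ := by
    rw [hT]; push_cast; nlinarith [hτ.le]
  have htermR : ∀ k < M, (∫ t in a k..a (k + 1), ‖f (t + τ) - f t‖) = c (k + 1) * τ := by
    intro k hk
    rw [intervalIntegral.integral_of_le (hle k),
      setIntegral_congr_fun measurableSet_Ioc (fun t ht => hRpt k hk t ht),
      ← intervalIntegral.integral_of_le (hle k), intervalIntegral.integral_const]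
    simp only [ha, smul_eq_mul]
    push_cast
    ring
  have hR : ∫ t in Ioc 0 (T - τ), ‖f (t + τ) - f t‖ = ∑ k ∈ Finset.range M, c (k + 1) * τ := by
    rw [← intervalIntegral.integral_of_le hTτ0]
    have h0 : a 0 = 0 := by simp [ha]
    have hNN : a M = T - τ := by simp only [ha, hT]; push_cast; ring
    rw [← h0, ← hNN, ← intervalIntegral.sum_integral_adjacent_intervals hIntR]
    exact Finset.sum_congr rfl fun k hk => htermR k (Finset.mem_range.mp hk)
  rw [hL, hR, Finset.sum_range_succ']
  have hc00 : c 0 * (τ / 2) = 0 := by simp [hc]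
  rw [hc00, add_zero]
  apply Finset.sum_le_sum
  intro k _
  nlinarith [hc0 (k + 1), hτ.le]
end
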